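/- There is no nonabelian group of order p⁵ (for p = 2 or p = 3) whose center is cyclic of order p and which contains an elementary abelian subgroup of order p⁴. -/

import Mathlib

/-- Kernel of a composition of homomorphisms of a finite group has cardinality at most the
product of the kernels' cardinalities. -/
theorem aux_ker_comp {H : Type*} [Group H] [Finite H] (f g : H →* H) :
    Nat.card (f.comp g).ker ≤ Nat.card f.ker * Nat.card g.ker := by
  let h : ((f.comp g).ker : Subgroup H) →* f.ker :=
    MonoidHom.mk' (fun x => ⟨g x.1, MonoidHom.mem_ker.mpr
        (by simpa [MonoidHom.comp_apply] using MonoidHom.mem_ker.mp x.2)⟩)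
      (fun x y => Subtype.ext (by simp))
  have h1 : Nat.card (f.comp g).ker
      = Nat.card ((f.comp g).ker ⧸ h.ker) * Nat.card h.ker :=
    Subgroup.card_eq_card_quotient_mul_card_subgroup h.ker
  have h2 : Nat.card ((f.comp g).ker ⧸ h.ker) = Nat.card h.range :=
    Nat.card_congr (QuotientGroup.quotientKerEquivRange h).toEquiv
  have h3 : Nat.card h.range ≤ Nat.card f.ker :=
    Nat.card_le_card_of_injective _ Subtype.coe_injective
  have h4 : Nat.card h.ker ≤ Nat.card g.ker := by
    refine Nat.card_le_card_of_injective
      (fun x => (⟨x.1.1, ?_⟩ : g.ker)) ?_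
    · have hx : h x.1 = 1 := x.2
      have : g x.1.1 = 1 := congrArg Subtype.val hx
      simpa [MonoidHom.mem_ker] using this
    · intro x y hxy
      simp only [Subtype.mk.injEq] at hxy
      exact Subtype.ext (Subtype.ext hxy)
  rw [h1, h2]
  exact Nat.mul_le_mul h3 h4

/-- Additive helper identity. -/
theorem cube_aux_add {H : Type*} [AddCommGroup H] (x s t : H) (hs : s + s + s = 0)
    (ht : t + t + t = 0) :
    x + -t + -(t + -s) + -(t + -s + -(s + -x)) = 0 := by
  have h1 : x + -t + -(t + -s) + -(t + -s + -(s + -x)) = (s + s + s) - (t + t + t) := by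
    abel
  rw [h1, hs, ht]
  simp

/-- There is no nonabelian group of order p⁵ (p = 2 or 3) with cyclic center of
order p containing an elementary abelian subgroup of order p⁴. -/
theorem stmt_9 (p : ℕ) (hp : p = 2 ∨ p = 3) (G : Type*) [Group G] [Finite G]
    (hcard : Nat.card G = p ^ 5) (hna : ∃ x y : G, x * y ≠ y * x)
    (V : Subgroup G) (hV1 : ∀ x ∈ V, x ^ p = 1)
    (hV2 : ∀ x ∈ V, ∀ y ∈ V, x * y = y * x)
    (hVcard : Nat.card V = p ^ 4)
    (hZ : IsCyclic (Subgroup.center G))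
    (hZcard : Nat.card (Subgroup.center G) = p) :
    False := by
  have hpp : p.Prime := by rcases hp with rfl | rfl; exacts [Nat.prime_two, Nat.prime_three]
  haveI : Fact p.Prime := ⟨hpp⟩
  have hp1 : 1 < p := hpp.one_lt
  -- V is a proper subgroup
  have hVne : V ≠ ⊤ := by
    intro h
    rw [h, Subgroup.card_top, hcard] at hVcard
    have : p ^ 4 < p ^ 5 := Nat.pow_lt_pow_right hp1 (by norm_num)
    omega
  -- V is normal
  haveI hN : V.Normal := by
    have hPG : IsPGroup p G := IsPGroup.of_card hcard
    haveI : Group.IsNilpotent G := hPG.isNilpotent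
    have hnc : NormalizerCondition G := normalizerCondition_of_isNilpotent
    have hlt : V < Subgroup.normalizer (V : Set G) := hnc V (lt_top_iff_ne_top.mpr hVne)
    have hd1 : Nat.card V ∣ Nat.card (Subgroup.normalizer (V : Set G)) := Subgroup.card_dvd_of_le hlt.le
    have hd2 : Nat.card (Subgroup.normalizer (V : Set G)) ∣ p ^ 5 := hcard ▸ Subgroup.card_subgroup_dvd_card _
    obtain ⟨k, hk5, hkeq⟩ := (Nat.dvd_prime_pow hpp).mp hd2
    have hk4 : 4 ≤ k := by
      have := hVcard ▸ hkeq ▸ hd1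
      exact (Nat.pow_dvd_pow_iff_le_right hp1).mp this
    have hk : k = 5 := by
      rcases Nat.eq_or_lt_of_le hk4 with h4 | h5
      · exfalso
        have hcardeq : Nat.card (Subgroup.normalizer (V : Set G)) ≤ Nat.card V := by
          rw [hkeq, ← h4, hVcard]
        exact hlt.ne (Subgroup.eq_of_le_of_card_ge hlt.le hcardeq)
      · omega
    have : Subgroup.normalizer (V : Set G) = ⊤ :=
      Subgroup.eq_top_of_card_eq _ (by rw [hkeq, hk, hcard])
    exact Subgroup.normalizer_eq_top_iff.mp this
  -- an element outside V
  obtain ⟨a, ha⟩ : ∃ a : G, a ∉ V := by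
    by_contra h
    push_neg at h
    exact hVne ((Subgroup.eq_top_iff' V).mpr h)
  -- index of V is p
  have hQp : Nat.card (G ⧸ V) = p := by
    have hmul := Subgroup.card_eq_card_quotient_mul_card_subgroup V
    rw [hcard, hVcard] at hmul
    have hp4 : 0 < p ^ 4 := pow_pos hpp.pos 4
    have : Nat.card (G ⧸ V) * p ^ 4 = p * p ^ 4 := by rw [← hmul]; ring
    exact Nat.eq_of_mul_eq_mul_right hp4 this
  have hidx : V.index = p := by rw [Subgroup.index_eq_card, hQp]
  have hap : a ^ p ∈ V := by rw [← hidx]; exact Subgroup.pow_index_mem V a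
  -- V is commutative
  letI : CommGroup V := { (inferInstance : Group V) with mul_comm := fun x y => Subtype.ext (hV2 _ x.2 _ y.2) }
  -- the conjugation endomorphism of V
  let σm : V →* V :=
    MonoidHom.mk' (fun x => ⟨a * x.1 * a⁻¹, hN.conj_mem x.1 x.2 a⟩)
      (fun x y => Subtype.ext (by push_cast; group))
  have hσcoe : ∀ x : V, (σm x : G) = a * x.1 * a⁻¹ := fun _ => rfl
  -- φ x = (a x a⁻¹) x⁻¹
  let φ : V →* V :=
    MonoidHom.mk' (fun x => σm x * x⁻¹)
      (fun x y => by
        show σm (x * y) * (x * y)⁻¹ = σm x * x⁻¹ * (σm y * y⁻¹)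
        rw [map_mul, mul_inv]; exact mul_mul_mul_comm _ _ _ _)
  have hφ : ∀ x : V, φ x = σm x * x⁻¹ := fun _ => rfl
  -- elements of V have order dividing p
  have hordV : ∀ y : V, y ^ p = 1 := fun y => Subtype.ext (by
    push_cast
    exact hV1 y.1 y.2)
  -- decomposition of G
  have horder : orderOf ((a : G) : G ⧸ V) = p := by
    have h1 : ((a : G) : G ⧸ V) ≠ 1 := by
      simpa [QuotientGroup.eq_one_iff] using ha
    have h2 : orderOf ((a : G) : G ⧸ V) ∣ p := by
      rw [← hQp]; exact orderOf_dvd_natCard _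
    rcases (Nat.dvd_prime hpp).mp h2 with h | h
    · exact absurd (orderOf_eq_one_iff.mp h) h1
    · exact h
  have htop : Subgroup.zpowers ((a : G) : G ⧸ V) = ⊤ :=
    Subgroup.eq_top_of_card_eq _ (by rw [Nat.card_zpowers, horder, hQp])
  have hdecomp : ∀ g : G, ∃ k : ℤ, ∃ v ∈ V, g = a ^ k * v := by
    intro g
    have hmem : ((g : G) : G ⧸ V) ∈ Subgroup.zpowers ((a : G) : G ⧸ V) := by
      rw [htop]; exact Subgroup.mem_top _
    obtain ⟨k, hk⟩ := Subgroup.mem_zpowers_iff.mp hmem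
    refine ⟨k, (a ^ k)⁻¹ * g, ?_, by group⟩
    have : ((a ^ k : G) : G ⧸ V) = ((g : G) : G ⧸ V) := by
      rw [QuotientGroup.mk_zpow]; exact hk
    exact (QuotientGroup.eq ).mp this
  -- elements of V commuting with a are central
  have hcent : ∀ x : G, x ∈ V → a * x = x * a → x ∈ Subgroup.center G := by
    intro x hxV hax
    rw [Subgroup.mem_center_iff]
    intro g
    obtain ⟨k, v, hv, rfl⟩ := hdecomp g
    have hc : Commute a x := hax
    have h1 : v * x = x * v := hV2 v hv x hxV
    calc a ^ k * v * x = a ^ k * (x * v) := by rw [mul_assoc, h1]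
      _ = x * (a ^ k * v) := by
          rw [← mul_assoc, (hc.zpow_left k).eq, mul_assoc]
  -- the kernel of φ has at most p elements
  have hkerφ : Nat.card φ.ker ≤ p := by
    have hle : Nat.card φ.ker ≤ Nat.card (Subgroup.center G) := by
      refine Nat.card_le_card_of_injective
        (fun x => (⟨x.1.1, ?_⟩ : Subgroup.center G)) ?_
      · refine hcent _ x.1.2 ?_
        have hx : σm x.1 * (x.1)⁻¹ = 1 := x.2
        have hfix : σm x.1 = x.1 := by rwa [mul_inv_eq_one] at hx
        have hcoe : a * x.1.1 * a⁻¹ = x.1.1 := congrArg Subtype.val hfix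
        calc a * x.1.1 = (a * x.1.1 * a⁻¹) * a := by group
          _ = x.1.1 * a := by rw [hcoe]
      · intro x y hxy
        simp only [Subtype.mk.injEq] at hxy
        exact Subtype.ext (Subtype.ext hxy)
    rwa [hZcard] at hle
  -- now split on p
  rcases hp with rfl | rfl
  · -- p = 2
    have hsq : ∀ y : V, y * y = 1 := fun y => by
      have := hordV y; rwa [pow_two] at this
    have hap' : a * a ∈ V := by rwa [pow_two] at hap
    have hσ2 : ∀ x : V, σm (σm x) = x := fun x => Subtype.ext (by
      rw [hσcoe, hσcoe]
      have h := hV2 _ hap' _ x.2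
      calc a * (a * x.1 * a⁻¹) * a⁻¹ = a * a * x.1 * (a * a)⁻¹ := by group
        _ = x.1 := by rw [h]; group)
    have key2 : ∀ x : V, φ (φ x) = 1 := by
      intro x
      rw [hφ, hφ, map_mul, map_inv, hσ2]
      have : x * (σm x)⁻¹ * (σm x * x⁻¹)⁻¹ = (x * x) * (σm x * σm x)⁻¹ := by
        simp only [mul_inv, inv_inv]
        ac_rfl
      rw [this, hsq x, hsq (σm x), inv_one, one_mul]
    have hker : (φ.comp φ).ker = ⊤ :=
      (Subgroup.eq_top_iff' _).mpr fun x => MonoidHom.mem_ker.mpr (key2 x)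
    have hc : Nat.card (φ.comp φ).ker = 2 ^ 4 := by
      rw [hker, Subgroup.card_top, hVcard]
    have hb := aux_ker_comp φ φ
    rw [hc] at hb
    have := le_trans hb (Nat.mul_le_mul hkerφ hkerφ)
    norm_num at this
  · -- p = 3
    have hcube : ∀ y : V, y * y * y = 1 := fun y => by
      have := hordV y; rwa [pow_succ, pow_two] at this
    have hap' : a * a * a ∈ V := by
      rwa [show a ^ 3 = a * a * a by rw [pow_succ, pow_two]] at hap
    have hσ3 : ∀ x : V, σm (σm (σm x)) = x := fun x => Subtype.ext (by
      rw [hσcoe, hσcoe, hσcoe]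
      have h := hV2 _ hap' _ x.2
      calc a * (a * (a * x.1 * a⁻¹) * a⁻¹) * a⁻¹ = a * a * a * x.1 * (a * a * a)⁻¹ := by
            group
        _ = x.1 := by rw [h]; group)
    have key3 : ∀ x : V, φ (φ (φ x)) = 1 := by
      intro x
      rw [hφ, hφ, hφ, map_mul, map_inv, map_mul, map_inv, map_mul, map_inv, hσ3]
      set s := σm x with hs
      set t := σm s with ht
      exact cube_aux_add (H := Additive ↥V) x s t (hcube s) (hcube t)
    have hker : (φ.comp (φ.comp φ)).ker = ⊤ :=
      (Subgroup.eq_top_iff' _).mpr fun x => MonoidHom.mem_ker.mpr (key3 x)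
    have hc : Nat.card (φ.comp (φ.comp φ)).ker = 3 ^ 4 := by
      rw [hker, Subgroup.card_top, hVcard]
    have hb := aux_ker_comp φ (φ.comp φ)
    have hb2 := aux_ker_comp φ φ
    rw [hc] at hb
    have h1 := le_trans hb (Nat.mul_le_mul hkerφ (le_trans hb2 (Nat.mul_le_mul hkerφ hkerφ)))
    norm_num at h1
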